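/- Let n ≥ 3 be an integer and let u be a positive C¹ function on ℝⁿ \ {0}. Suppose there exist positive constants C and λ ∈ (0,1) such that ∫_{S^{n-1}} |∂v/∂s|^{2n/(n-2)}(s,θ) dθ ≤ C e^{λ s} for all sufficiently large s. Then for every ε > 0 with ε + λ < 1 there is a positive constant C₇ such that ∫_{S_r} u^{2n/(n-2)} dS ≤ C₇ r^{−ε} for all sufficiently large r, where ∫_{S_r} u^{2n/(n-2)} dS = r^{n-1} ∫_{S^{n-1}} u^{2n/(n-2)}(rθ) dθ. -/

import Mathlib

open MeasureTheory Metric Real Set Filter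

noncomputable section

/-- Euclidean space ℝⁿ. -/
abbrev En (n : ℕ) : Type := EuclideanSpace ℝ (Fin n)

/-- The standard Laplacian on ℝⁿ: Δu(x) = ∑ᵢ ∂²u/∂xᵢ². -/
def lap {n : ℕ} (u : En n → ℝ) (x : En n) : ℝ :=
  ∑ i : Fin n, fderiv ℝ (fun y => fderiv ℝ u y (EuclideanSpace.single i 1)) x
    (EuclideanSpace.single i 1)

/-- The surface measure dθ on the unit sphere S^{n-1} ⊂ ℝⁿ. -/
def sphereM (n : ℕ) : Measure (sphere (0 : En n) 1) :=
  (volume : Measure (En n)).toSphere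

/-- The radial derivative (∂u/∂r)(x) = (x/|x|)·∇u(x). -/
def radDeriv {n : ℕ} (u : En n → ℝ) (x : En n) : ℝ :=
  fderiv ℝ u x (‖x‖⁻¹ • x)

/-- The associated function on the cylinder: v(s,θ) = e^{(n-2)s/2} u(e^s θ). -/
def vfun {n : ℕ} (u : En n → ℝ) (s : ℝ) (θ : sphere (0 : En n) 1) : ℝ :=
  Real.exp (((n : ℝ) - 2) * s / 2) * u (Real.exp s • (θ : En n))

/-- The partial derivative ∂v/∂s. -/
def dvds {n : ℕ} (u : En n → ℝ) (s : ℝ) (θ : sphere (0 : En n) 1) : ℝ :=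
  deriv (fun t => vfun u t θ) s

/-- The Pohozaev quantity P(u,r) = ((n-2)/(2n)) ∫_{B₀(r)} x·∇K(x) u(x)^{2n/(n-2)} dx. -/
def poho {n : ℕ} (K u : En n → ℝ) (r : ℝ) : ℝ :=
  (((n : ℝ) - 2) / (2 * (n : ℝ))) *
    ∫ x in ball (0 : En n) r,
      (inner ℝ x (gradient K x) : ℝ) * u x ^ (2 * (n : ℝ) / ((n : ℝ) - 2))

namespace StmtAux

lemma two_rpow {a b p : ℝ} (ha : 0 ≤ a) (hb : 0 ≤ b) (hp : 1 ≤ p) :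
    (a + b) ^ p ≤ 2 ^ (p - 1) * (a ^ p + b ^ p) := by
  have hc := (convexOn_rpow hp).2 (mem_Ici.2 ha) (mem_Ici.2 hb)
    (by norm_num : (0:ℝ) ≤ 1/2) (by norm_num : (0:ℝ) ≤ 1/2) (by norm_num)
  simp only [smul_eq_mul] at hc
  have h2 : (a + b) ^ p = 2 ^ p * (1/2 * a + 1/2 * b) ^ p := by
    rw [← Real.mul_rpow (by norm_num) (by positivity)]
    congr 1; ring
  have h3 : (2:ℝ) ^ p = 2 ^ (p - 1) * 2 := by
    rw [show p = p - 1 + 1 by ring, Real.rpow_add_one (by norm_num : (2:ℝ) ≠ 0)]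
    ring_nf
  rw [h2, h3]
  calc 2 ^ (p-1) * 2 * (1/2 * a + 1/2 * b) ^ p
      ≤ 2 ^ (p-1) * 2 * (1/2 * a ^ p + 1/2 * b ^ p) := by
        apply mul_le_mul_of_nonneg_left hc (by positivity)
    _ = 2 ^ (p-1) * (a ^ p + b ^ p) := by ring

lemma hoelder {f : ℝ → ℝ} (hf : Continuous f) {S s p q : ℝ} (hSs : S ≤ s)
    (hpq : p.HolderConjugate q) :
    (∫ t in Set.Ioc S s, |f t|) ^ p ≤ (s - S) ^ (p - 1) * ∫ t in Set.Ioc S s, |f t| ^ p := by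
  set μ := volume.restrict (Set.Ioc S s) with hμ
  haveI : IsFiniteMeasure μ := ⟨by
    rw [hμ, Measure.restrict_apply_univ]; exact measure_Ioc_lt_top⟩
  obtain ⟨M, hM⟩ := isCompact_Icc.exists_bound_of_continuousOn
    (s := Set.Icc S s) hf.continuousOn
  have hfm : MemLp (fun t => |f t|) (ENNReal.ofReal p) μ := by
    refine MemLp.of_bound (hf.abs.aestronglyMeasurable) M ?_
    have hae : ∀ᵐ t ∂μ, t ∈ Set.Ioc S s := ae_restrict_mem measurableSet_Ioc
    filter_upwards [hae] with t ht
    simpa [abs_abs] using hM t (Set.Ioc_subset_Icc_self ht)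
  have hgm : MemLp (fun _ : ℝ => (1:ℝ)) (ENNReal.ofReal q) μ := memLp_const 1
  have H := integral_mul_le_Lp_mul_Lq_of_nonneg hpq
    (Filter.Eventually.of_forall fun t => abs_nonneg (f t))
    (Filter.Eventually.of_forall fun _ => zero_le_one) hfm hgm
  simp only [mul_one, Real.one_rpow] at H
  have hvol : (μ Set.univ).toReal = s - S := by
    rw [hμ, Measure.restrict_apply_univ, Real.volume_Ioc,
      ENNReal.toReal_ofReal (by linarith)]
  rw [integral_const, measureReal_def, hvol, smul_eq_mul, mul_one] at H
  have hIp : 0 ≤ ∫ t, |f t| ^ p ∂μ :=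
    integral_nonneg fun t => Real.rpow_nonneg (abs_nonneg _) _
  have hI1 : 0 ≤ ∫ t, |f t| ∂μ := integral_nonneg fun t => abs_nonneg _
  have h2 : (∫ t, |f t| ∂μ) ^ p ≤ ((∫ t, |f t| ^ p ∂μ) ^ (1/p) * (s - S) ^ (1/q)) ^ p :=
    Real.rpow_le_rpow hI1 H hpq.nonneg
  refine h2.trans_eq ?_
  rw [Real.mul_rpow (Real.rpow_nonneg hIp _) (Real.rpow_nonneg (by linarith) _),
    ← Real.rpow_mul hIp, ← Real.rpow_mul (by linarith : (0:ℝ) ≤ s - S),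
    one_div_mul_cancel hpq.ne_zero,
    show 1/q*p = p - 1 by rw [← hpq.div_conj_eq_sub_one]; ring, Real.rpow_one]
  ring

lemma cont_integrable {X : Type*} [MeasurableSpace X] [TopologicalSpace X]
    [OpensMeasurableSpace X] [CompactSpace X] {μ : Measure X} [IsFiniteMeasure μ]
    {f : X → ℝ} (hf : Continuous f) : Integrable f μ := by
  obtain ⟨M, hM⟩ := isCompact_univ.exists_bound_of_continuousOn
    (s := (Set.univ : Set X)) hf.continuousOn
  exact (integrable_const M).mono' hf.aestronglyMeasurable
    (Filter.Eventually.of_forall fun x => hM x (Set.mem_univ x))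

variable {n : ℕ} {u : En n → ℝ}

lemma sm_ne (t : ℝ) (θ : sphere (0 : En n) 1) : Real.exp t • (θ : En n) ≠ 0 := by
  have hθ : ‖(θ : En n)‖ = 1 := by simpa using mem_sphere_zero_iff_norm.mp θ.2
  intro h
  rcases smul_eq_zero.mp h with h | h
  · exact (Real.exp_pos t).ne' h
  · rw [h] at hθ; simp at hθ

def Gf (n : ℕ) (u : En n → ℝ) (t : ℝ) (θ : sphere (0 : En n) 1) : ℝ :=
  (((n : ℝ) - 2) / 2 * Real.exp (((n : ℝ) - 2) * t / 2)) * u (Real.exp t • (θ : En n)) +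
    Real.exp (((n : ℝ) - 2) * t / 2) *
      (fderiv ℝ u (Real.exp t • (θ : En n)) (Real.exp t • (θ : En n)))

lemma hasDerivAt_vfun (hu : ContDiffOn ℝ 1 u {(0 : En n)}ᶜ) (t : ℝ) (θ : sphere (0 : En n) 1) :
    HasDerivAt (fun t => vfun u t θ) (Gf n u t θ) t := by
  have hθ : Real.exp t • (θ : En n) ≠ 0 := sm_ne t θ
  have h1 : HasDerivAt (fun t : ℝ => Real.exp (((n : ℝ) - 2) * t / 2))
      (((n : ℝ) - 2) / 2 * Real.exp (((n : ℝ) - 2) * t / 2)) t := by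
    have hf : HasDerivAt (fun t : ℝ => ((n : ℝ) - 2) * t / 2) (((n : ℝ) - 2) / 2) t := by
      have := ((hasDerivAt_id t).const_mul ((n : ℝ) - 2)).div_const 2
      simpa using this
    simpa [mul_comm] using hf.exp
  have hc : HasDerivAt (fun t : ℝ => Real.exp t • (θ : En n)) (Real.exp t • (θ : En n)) t :=
    (Real.hasDerivAt_exp t).smul_const (θ : En n)
  have hd : DifferentiableAt ℝ u (Real.exp t • (θ : En n)) :=
    (hu.differentiableOn one_ne_zero).differentiableAt (isOpen_compl_singleton.mem_nhds hθ)
  have h2 : HasDerivAt (fun t : ℝ => u (Real.exp t • (θ : En n)))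
      (fderiv ℝ u (Real.exp t • (θ : En n)) (Real.exp t • (θ : En n))) t :=
    hd.hasFDerivAt.comp_hasDerivAt t hc
  exact h1.mul h2

lemma dvds_eq (hu : ContDiffOn ℝ 1 u {(0 : En n)}ᶜ) (t : ℝ) (θ : sphere (0 : En n) 1) :
    dvds u t θ = Gf n u t θ :=
  (hasDerivAt_vfun hu t θ).deriv

lemma hasDerivAt_vfun' (hu : ContDiffOn ℝ 1 u {(0 : En n)}ᶜ) (t : ℝ) (θ : sphere (0 : En n) 1) :
    HasDerivAt (fun t => vfun u t θ) (dvds u t θ) t := by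
  rw [dvds_eq hu]; exact hasDerivAt_vfun hu t θ

lemma continuous_Gf (hu : ContDiffOn ℝ 1 u {(0 : En n)}ᶜ) :
    Continuous fun z : ℝ × sphere (0 : En n) 1 => Gf n u z.1 z.2 := by
  have hm : Continuous fun z : ℝ × sphere (0 : En n) 1 => Real.exp z.1 • (z.2 : En n) :=
    (Real.continuous_exp.comp continuous_fst).smul (continuous_subtype_val.comp continuous_snd)
  have hmem : ∀ z : ℝ × sphere (0 : En n) 1,
      Real.exp z.1 • (z.2 : En n) ∈ ({(0 : En n)}ᶜ : Set (En n)) :=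
    fun z => sm_ne z.1 z.2
  have huc : Continuous fun z : ℝ × sphere (0 : En n) 1 => u (Real.exp z.1 • (z.2 : En n)) :=
    hu.continuousOn.comp_continuous hm hmem
  have hfc : ContinuousOn (fderiv ℝ u) ({(0 : En n)}ᶜ : Set (En n)) :=
    hu.continuousOn_fderiv_of_isOpen isOpen_compl_singleton le_rfl
  have hA : Continuous fun z : ℝ × sphere (0 : En n) 1 =>
      fderiv ℝ u (Real.exp z.1 • (z.2 : En n)) := hfc.comp_continuous hm hmem
  have happ : Continuous fun z : ℝ × sphere (0 : En n) 1 =>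
      fderiv ℝ u (Real.exp z.1 • (z.2 : En n)) (Real.exp z.1 • (z.2 : En n)) := hA.clm_apply hm
  have hexp : Continuous fun z : ℝ × sphere (0 : En n) 1 =>
      Real.exp (((n : ℝ) - 2) * z.1 / 2) := by fun_prop
  exact ((continuous_const.mul hexp).mul huc).add (hexp.mul happ)

lemma continuous_dvds (hu : ContDiffOn ℝ 1 u {(0 : En n)}ᶜ) :
    Continuous fun z : ℝ × sphere (0 : En n) 1 => dvds u z.1 z.2 := by
  have : (fun z : ℝ × sphere (0 : En n) 1 => dvds u z.1 z.2)
      = fun z => Gf n u z.1 z.2 := by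
    funext z; exact dvds_eq hu z.1 z.2
  rw [this]; exact continuous_Gf hu

lemma continuous_vfun (hu : ContDiffOn ℝ 1 u {(0 : En n)}ᶜ) :
    Continuous fun z : ℝ × sphere (0 : En n) 1 => vfun u z.1 z.2 := by
  have hm : Continuous fun z : ℝ × sphere (0 : En n) 1 => Real.exp z.1 • (z.2 : En n) :=
    (Real.continuous_exp.comp continuous_fst).smul (continuous_subtype_val.comp continuous_snd)
  have huc : Continuous fun z : ℝ × sphere (0 : En n) 1 => u (Real.exp z.1 • (z.2 : En n)) :=
    hu.continuousOn.comp_continuous hm (fun z => sm_ne z.1 z.2)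
  have hexp : Continuous fun z : ℝ × sphere (0 : En n) 1 =>
      Real.exp (((n : ℝ) - 2) * z.1 / 2) := by fun_prop
  exact hexp.mul huc

end StmtAux

open StmtAux

theorem stmt_5 (n : ℕ) (hn : 3 ≤ n) (u : En n → ℝ)
    (hu_reg : ContDiffOn ℝ 1 u {(0 : En n)}ᶜ)
    (hu_pos : ∀ x : En n, x ≠ 0 → 0 < u x)
    (C l : ℝ) (hC : 0 < C) (hl0 : 0 < l) (hl1 : l < 1)
    (hv : ∃ S : ℝ, ∀ s : ℝ, S ≤ s →
      (∫ θ, |dvds u s θ| ^ (2 * (n : ℝ) / ((n : ℝ) - 2)) ∂(sphereM n))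
        ≤ C * Real.exp (l * s)) :
    ∀ ε : ℝ, 0 < ε → ε + l < 1 →
      ∃ C₇ : ℝ, 0 < C₇ ∧ ∃ R : ℝ, ∀ r : ℝ, R ≤ r →
        r ^ (n - 1) * (∫ θ, u (r • (θ : En n)) ^ (2 * (n : ℝ) / ((n : ℝ) - 2)) ∂(sphereM n))
          ≤ C₇ * r ^ (-ε) := by
  intro ε hε hεl
  obtain ⟨S, hS⟩ := hv
  set P : ℝ := 2 * (n : ℝ) / ((n : ℝ) - 2) with hPdef
  have hn3 : (3:ℝ) ≤ (n : ℝ) := by exact_mod_cast hn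
  have hn2 : (0:ℝ) < (n : ℝ) - 2 := by linarith
  have hP1 : 1 < P := by
    rw [hPdef, lt_div_iff₀ hn2]; linarith
  have hP0 : (0:ℝ) ≤ P := by linarith
  have hpq : P.HolderConjugate (Real.conjExponent P) := Real.HolderConjugate.conjExponent hP1
  haveI : IsFiniteMeasure (sphereM n) := by
    show IsFiniteMeasure (volume : Measure (En n)).toSphere; infer_instance
  have hcd : Continuous fun z : ℝ × sphere (0 : En n) 1 => dvds u z.1 z.2 :=
    continuous_dvds hu_reg
  have hcv : Continuous fun z : ℝ × sphere (0 : En n) 1 => vfun u z.1 z.2 :=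
    continuous_vfun hu_reg
  have hvpos : ∀ (t : ℝ) (θ : sphere (0 : En n) 1), 0 < vfun u t θ := fun t θ =>
    mul_pos (Real.exp_pos _) (hu_pos _ (sm_ne t θ))
  set A : ℝ := ∫ θ, |vfun u S θ| ^ P ∂(sphereM n) with hAdef
  have hA_int : Integrable (fun θ => |vfun u S θ| ^ P) (sphereM n) := by
    apply cont_integrable
    exact ((hcv.comp (Continuous.prodMk_right S)).abs).rpow_const fun θ => Or.inr hP0
  set B1 : ℝ := 2 ^ (P - 1) * A with hB1def
  set B2 : ℝ := 2 ^ (P - 1) * C with hB2def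
  -- key estimate
  have key : ∀ s : ℝ, S ≤ s → (∫ θ, vfun u s θ ^ P ∂(sphereM n))
      ≤ B1 + B2 * ((s - S) ^ P * Real.exp (l * s)) := by
    intro s hs
    have hsS : (0:ℝ) ≤ s - S := by linarith
    set ν := volume.restrict (Set.Ioc S s) with hνdef
    haveI : IsFiniteMeasure ν := ⟨by
      rw [hνdef, Measure.restrict_apply_univ]; exact measure_Ioc_lt_top⟩
    set F : sphere (0 : En n) 1 × ℝ → ℝ := fun z => |dvds u z.2 z.1| ^ P with hFdef
    have hFc : Continuous F := by
      apply Continuous.rpow_const _ (fun _ => Or.inr hP0)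
      exact (hcd.comp (continuous_snd.prodMk continuous_fst)).abs
    have hFint : Integrable F ((sphereM n).prod ν) := by
      obtain ⟨M, hM⟩ := (isCompact_univ.prod isCompact_Icc).exists_bound_of_continuousOn
        (s := (Set.univ : Set (sphere (0 : En n) 1)) ×ˢ Set.Icc S s) hFc.continuousOn
      refine (integrable_const M).mono' hFc.aestronglyMeasurable ?_
      have hae : ∀ᵐ z ∂((sphereM n).prod ν), z.2 ∈ Set.Ioc S s := by
        rw [ae_iff]
        refine measure_mono_null (fun z hz => ?_)
          (show ((sphereM n).prod ν) ((Set.univ : Set (sphere (0 : En n) 1)) ×ˢ (Set.Ioc S s)ᶜ) = 0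
            from ?_)
        · exact ⟨Set.mem_univ _, hz⟩
        · rw [Measure.prod_prod, Measure.restrict_apply measurableSet_Ioc.compl]
          simp
      filter_upwards [hae] with z hz
      exact hM z ⟨Set.mem_univ _, Set.Ioc_subset_Icc_self hz⟩
    -- pointwise bound
    have hpt : ∀ θ : sphere (0 : En n) 1, vfun u s θ ^ P
        ≤ 2 ^ (P - 1) * (|vfun u S θ| ^ P
            + (s - S) ^ (P - 1) * ∫ t in Set.Ioc S s, |dvds u t θ| ^ P) := by
      intro θ
      have hcdθ : Continuous fun t => dvds u t θ :=
        hcd.comp (continuous_id.prodMk continuous_const)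
      have hder : ∀ t ∈ Set.uIcc S s, HasDerivAt (fun t => vfun u t θ) (dvds u t θ) t :=
        fun t _ => hasDerivAt_vfun' hu_reg t θ
      have hftc := intervalIntegral.integral_eq_sub_of_hasDerivAt hder
        (hcdθ.intervalIntegrable S s)
      have habs : |∫ t in S..s, dvds u t θ| ≤ ∫ t in Set.Ioc S s, |dvds u t θ| := by
        rw [← intervalIntegral.integral_of_le hs]
        exact intervalIntegral.abs_integral_le_integral_abs hs
      have h1 : vfun u s θ ≤ |vfun u S θ| + ∫ t in Set.Ioc S s, |dvds u t θ| := by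
        have : vfun u s θ = vfun u S θ + ∫ t in S..s, dvds u t θ := by rw [hftc]; ring
        rw [this]
        exact add_le_add (le_abs_self _) ((le_abs_self _).trans habs)
      have hInn : (0:ℝ) ≤ ∫ t in Set.Ioc S s, |dvds u t θ| :=
        integral_nonneg fun t => abs_nonneg _
      have h3 : vfun u s θ ^ P
          ≤ (|vfun u S θ| + ∫ t in Set.Ioc S s, |dvds u t θ|) ^ P :=
        Real.rpow_le_rpow (hvpos s θ).le h1 hP0
      have h4 := two_rpow (abs_nonneg (vfun u S θ)) hInn hP1.le
      have h5 := hoelder hcdθ hs hpq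
      calc vfun u s θ ^ P
          ≤ 2 ^ (P - 1) * (|vfun u S θ| ^ P
              + (∫ t in Set.Ioc S s, |dvds u t θ|) ^ P) := h3.trans h4
        _ ≤ 2 ^ (P - 1) * (|vfun u S θ| ^ P
              + (s - S) ^ (P - 1) * ∫ t in Set.Ioc S s, |dvds u t θ| ^ P) := by
            apply mul_le_mul_of_nonneg_left _ (by positivity)
            exact add_le_add_right h5 _
    -- integrability of the majorant
    have hg2int : Integrable (fun θ => ∫ t in Set.Ioc S s, |dvds u t θ| ^ P) (sphereM n) := by
      have := hFint.integral_prod_left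
      exact this
    have hmaj : Integrable (fun θ => 2 ^ (P - 1) * (|vfun u S θ| ^ P
        + (s - S) ^ (P - 1) * ∫ t in Set.Ioc S s, |dvds u t θ| ^ P)) (sphereM n) :=
      (hA_int.add (hg2int.const_mul _)).const_mul _
    have hmono := integral_mono_of_nonneg
      (Filter.Eventually.of_forall fun θ => (Real.rpow_nonneg (hvpos s θ).le P))
      hmaj (Filter.Eventually.of_forall hpt)
    -- compute / bound the RHS
    have hswap : (∫ θ, (∫ t in Set.Ioc S s, |dvds u t θ| ^ P) ∂(sphereM n))
        = ∫ t in Set.Ioc S s, (∫ θ, |dvds u t θ| ^ P ∂(sphereM n)) := by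
      exact integral_integral_swap hFint
    have hb1 : (∫ t in Set.Ioc S s, (∫ θ, |dvds u t θ| ^ P ∂(sphereM n)))
        ≤ ∫ t in Set.Ioc S s, C * Real.exp (l * t) := by
      refine integral_mono_of_nonneg
        (Filter.Eventually.of_forall fun t =>
          integral_nonneg fun θ => Real.rpow_nonneg (abs_nonneg _) _)
        ((continuous_const.mul (by fun_prop : Continuous fun t : ℝ =>
          Real.exp (l * t))).integrableOn_Ioc) ?_
      filter_upwards [ae_restrict_mem measurableSet_Ioc] with t ht
      exact hS t ht.1.le
    have hb2 : (∫ t in Set.Ioc S s, C * Real.exp (l * t))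
        ≤ (s - S) * (C * Real.exp (l * s)) := by
      have hstep : (∫ t in Set.Ioc S s, C * Real.exp (l * t))
          ≤ ∫ _t in Set.Ioc S s, C * Real.exp (l * s) := by
        refine integral_mono_of_nonneg
          (Filter.Eventually.of_forall fun t => by positivity)
          (integrableOn_const measure_Ioc_lt_top.ne) ?_
        filter_upwards [ae_restrict_mem measurableSet_Ioc] with t ht
        have : Real.exp (l * t) ≤ Real.exp (l * s) :=
          Real.exp_le_exp.mpr (mul_le_mul_of_nonneg_left ht.2 hl0.le)
        exact mul_le_mul_of_nonneg_left this hC.le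
      refine hstep.trans_eq ?_
      rw [setIntegral_const, Real.volume_real_Ioc_of_le hs, smul_eq_mul]
    have hg2bound : (∫ θ, (∫ t in Set.Ioc S s, |dvds u t θ| ^ P) ∂(sphereM n))
        ≤ (s - S) * (C * Real.exp (l * s)) := by
      rw [hswap]; exact hb1.trans hb2
    have hrhs : (∫ θ, 2 ^ (P - 1) * (|vfun u S θ| ^ P
        + (s - S) ^ (P - 1) * ∫ t in Set.Ioc S s, |dvds u t θ| ^ P) ∂(sphereM n))
        = 2 ^ (P - 1) * (A + (s - S) ^ (P - 1)
            * ∫ θ, (∫ t in Set.Ioc S s, |dvds u t θ| ^ P) ∂(sphereM n)) := by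
      rw [integral_const_mul, integral_add hA_int (hg2int.const_mul _), integral_const_mul]
    have hpowid : (s - S) ^ (P - 1) * (s - S) = (s - S) ^ P := by
      nth_rewrite 2 [show s - S = (s - S) ^ (1:ℝ) by rw [Real.rpow_one]]
      rw [← Real.rpow_add' hsS (by intro h; simp at h; linarith)]
      norm_num
    calc (∫ θ, vfun u s θ ^ P ∂(sphereM n))
        ≤ 2 ^ (P - 1) * (A + (s - S) ^ (P - 1)
            * ∫ θ, (∫ t in Set.Ioc S s, |dvds u t θ| ^ P) ∂(sphereM n)) := by
          rw [← hrhs]; exact hmono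
      _ ≤ 2 ^ (P - 1) * (A + (s - S) ^ (P - 1) * ((s - S) * (C * Real.exp (l * s)))) := by
          apply mul_le_mul_of_nonneg_left _ (by positivity)
          apply add_le_add_right
          exact mul_le_mul_of_nonneg_left hg2bound (Real.rpow_nonneg hsS _)
      _ = B1 + B2 * ((s - S) ^ P * Real.exp (l * s)) := by
          rw [hB1def, hB2def, ← hpowid]; ring
  -- the decay function
  set G : ℝ → ℝ := fun s => (B1 + B2 * ((s - S) ^ P * Real.exp (l * s))) * Real.exp ((ε - 1) * s)
    with hGdef
  have hGten : Tendsto G atTop (nhds 0) := by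
    have hGeq : ∀ s, G s = B1 * Real.exp ((ε - 1) * s)
        + B2 * ((s - S) ^ P * Real.exp ((l + ε - 1) * s)) := by
      intro s
      rw [show (l + ε - 1) * s = l * s + (ε - 1) * s by ring, Real.exp_add, hGdef]
      ring
    have hT1 : Tendsto (fun s => Real.exp ((ε - 1) * s)) atTop (nhds 0) := by
      have := tendsto_rpow_mul_exp_neg_mul_atTop_nhds_zero 0 (1 - ε) (by linarith)
      refine this.congr' ?_
      filter_upwards [eventually_gt_atTop 0] with x hx
      rw [Real.rpow_zero, one_mul, show -(1 - ε) * x = (ε - 1) * x by ring]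
    have hT2 : Tendsto (fun s => (s - S) ^ P * Real.exp ((l + ε - 1) * s)) atTop (nhds 0) := by
      have hb : (0:ℝ) < 1 - l - ε := by linarith
      have base := tendsto_rpow_mul_exp_neg_mul_atTop_nhds_zero P (1 - l - ε) hb
      have hcomp : Tendsto (fun s : ℝ => s - S) atTop atTop :=
        tendsto_atTop_add_const_right atTop (-S) tendsto_id
      have := (base.comp hcomp).mul_const (Real.exp (-(1 - l - ε) * S))
      rw [zero_mul] at this
      refine this.congr fun s => ?_
      simp only [Function.comp_apply]
      rw [mul_assoc, ← Real.exp_add]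
      congr 2
      ring
    rw [show (0:ℝ) = B1 * 0 + B2 * 0 by ring]
    exact Tendsto.congr (fun s => (hGeq s).symm)
      ((hT1.const_mul B1).add (hT2.const_mul B2))
  have hev : ∀ᶠ s in atTop, G s < 1 := hGten.eventually_lt_const one_pos
  obtain ⟨R₁, hR₁⟩ := eventually_atTop.mp hev
  refine ⟨1, one_pos, Real.exp (max R₁ S), fun r hr => ?_⟩
  have hr0 : (0:ℝ) < r := lt_of_lt_of_le (Real.exp_pos _) hr
  set s : ℝ := Real.log r with hsdef
  have hsge : max R₁ S ≤ s := (Real.le_log_iff_exp_le hr0).mpr hr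
  have hsR₁ : R₁ ≤ s := (le_max_left _ _).trans hsge
  have hsS : S ≤ s := (le_max_right _ _).trans hsge
  have hres : r = Real.exp s := (Real.exp_log hr0).symm
  -- rewrite the integral in terms of vfun
  have hint : (∫ θ, u (r • (θ : En n)) ^ P ∂(sphereM n))
      = Real.exp (-(n : ℝ) * s) * ∫ θ, vfun u s θ ^ P ∂(sphereM n) := by
    have hptw : ∀ θ : sphere (0 : En n) 1,
        vfun u s θ ^ P = Real.exp ((n : ℝ) * s) * u (r • (θ : En n)) ^ P := by
      intro θ
      rw [vfun, Real.mul_rpow (Real.exp_pos _).le (hu_pos _ (sm_ne s θ)).le,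
        Real.rpow_def_of_pos (Real.exp_pos _), Real.log_exp, hres]
      congr 2
      rw [hPdef]
      field_simp
    rw [integral_congr_ae (Filter.Eventually.of_forall hptw), integral_const_mul,
      ← mul_assoc, ← Real.exp_add]
    rw [show -(n : ℝ) * s + (n : ℝ) * s = 0 by ring, Real.exp_zero, one_mul]
  have hpow : r ^ (n - 1) = Real.exp (((n : ℝ) - 1) * s) := by
    have h1 : (((n - 1 : ℕ)) : ℝ) = (n : ℝ) - 1 := by
      have h2 : (1:ℕ) ≤ n := by omega
      push_cast [Nat.cast_sub h2]; ring
    rw [hres, ← Real.exp_nat_mul, h1]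
  calc r ^ (n - 1) * (∫ θ, u (r • (θ : En n)) ^ P ∂(sphereM n))
      = Real.exp (-s) * ∫ θ, vfun u s θ ^ P ∂(sphereM n) := by
        rw [hpow, hint, ← mul_assoc, ← Real.exp_add,
          show ((n:ℝ) - 1) * s + -(n:ℝ) * s = -s by ring]
    _ ≤ Real.exp (-s) * (B1 + B2 * ((s - S) ^ P * Real.exp (l * s))) :=
        mul_le_mul_of_nonneg_left (key s hsS) (Real.exp_pos _).le
    _ = G s * Real.exp (-(ε * s)) := by
        have hexp2 : Real.exp ((ε - 1) * s) * Real.exp (-(ε * s)) = Real.exp (-s) := by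
          rw [← Real.exp_add]; congr 1; ring
        simp only [hGdef]
        conv_rhs => rw [mul_assoc, hexp2]
        ring
    _ ≤ 1 * Real.exp (-(ε * s)) :=
        mul_le_mul_of_nonneg_right (hR₁ s hsR₁).le (Real.exp_pos _).le
    _ = 1 * r ^ (-ε) := by
        rw [Real.rpow_def_of_pos hr0,
          show Real.log r * (-ε) = -(ε * s) by rw [hsdef]; ring]
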